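/- Let N ≥ 2 and N/2 < K < N be integers. For every η ∈ ℰ_{N,K} and every k ∈ ℤ/Kℤ, the configuration σ^{(k,η)} : ℤ/Kℤ → {0,1} given by σ^{(k,η)}_l = 2 − d(x_{k+l−1}(η), x_{k+l}(η)) is well defined (each value lies in {0,1}) and has exactly 2K − N occupied sites, i.e. σ^{(k,η)} ∈ Γ_{K,2K−N}. -/

import Mathlib

open scoped Classical BigOperators

noncomputable section

/-- A particle configuration on the discrete circle `ℤ/Mℤ`. -/
abbrev Conf (M : ℕ) := ZMod M → Bool

/-- Number of occupied sites (particles) of a configuration. -/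
def numParticles {M : ℕ} [NeZero M] (η : Conf M) : ℕ :=
  (Finset.univ.filter fun x => η x = true).card

/-- Ergodicity: every pair of neighbouring sites carries at least one particle. -/
def isErgodic {M : ℕ} (η : Conf M) : Prop :=
  ∀ x : ZMod M, η x = true ∨ η (x + 1) = true

/-- The configuration `η` with the values at `x` and `y` exchanged. -/
def swapConf {α : Type*} [DecidableEq α] (η : α → Bool) (x y : α) : α → Bool :=
  fun z => if z = x then η y else if z = y then η x else η z

/-- The representative of `k ∈ ℤ/Kℤ` in `{1, …, K}`. -/
def repOne {K : ℕ} [NeZero K] (k : ZMod K) : ℕ :=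
  if k.val = 0 then K else k.val

/-- `Σ_{y=1}^{x} η_y`, the number of particles among sites `1, …, x`. -/
def countUpTo {N : ℕ} (η : Conf N) (x : ℕ) : ℕ :=
  ∑ y ∈ Finset.Icc 1 x, (if η ((y : ℕ) : ZMod N) = true then 1 else 0)

/-- `x_k(η) ∈ {1, …, N}`: the position of the `k`-th particle of `η`. -/
def pos {N K : ℕ} [NeZero K] (η : Conf N) (k : ZMod K) : ℕ :=
  sInf {x : ℕ | 1 ≤ x ∧ x ≤ N ∧ countUpTo η x = repOne k}

/-- The clockwise distance `d(a,b) ∈ {1, …, M}` from `a` to `b` on `ℤ/Mℤ`. -/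
def cdist {M : ℕ} [NeZero M] (a b : ZMod M) : ℕ :=
  if (b - a).val = 0 then M else (b - a).val

/-- The (integer) value `σ^{(k,η)}_l = 2 − d(x_{k+l−1}(η), x_{k+l}(η))`. -/
def sigmaVal {N K : ℕ} [NeZero N] [NeZero K] (η : Conf N) (k l : ZMod K) : ℤ :=
  2 - (cdist ((pos η (k + l - 1) : ℕ) : ZMod N) ((pos η (k + l) : ℕ) : ZMod N) : ℤ)

/-- The SSEP configuration `σ^{(k,η)}`, occupied at `l` iff `σ^{(k,η)}_l = 1`. -/
def sigmaConf {N K : ℕ} [NeZero N] [NeZero K] (η : Conf N) (k : ZMod K) : Conf K :=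
  fun l => decide (cdist ((pos η (k + l - 1) : ℕ) : ZMod N) ((pos η (k + l) : ℕ) : ZMod N) = 1)

namespace FepAux

variable {N K : ℕ}

lemma countUpTo_zero (η : Conf N) : countUpTo η 0 = 0 := by simp [countUpTo]

lemma countUpTo_succ (η : Conf N) (x : ℕ) :
    countUpTo η (x+1) = countUpTo η x + (if η (((x+1 : ℕ) : ZMod N)) = true then 1 else 0) := by
  unfold countUpTo
  rw [Finset.sum_Icc_succ_top (by omega)]

lemma countUpTo_mono (η : Conf N) : Monotone (countUpTo η) :=
  monotone_nat_of_le_succ fun x => by rw [countUpTo_succ]; exact Nat.le_add_right _ _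

lemma countUpTo_step (η : Conf N) (x : ℕ) : countUpTo η (x+1) ≤ countUpTo η x + 1 := by
  rw [countUpTo_succ]; split <;> omega

lemma countUpTo_succ_true (η : Conf N) {x : ℕ} (h : η (((x+1 : ℕ) : ZMod N)) = true) :
    countUpTo η (x+1) = countUpTo η x + 1 := by rw [countUpTo_succ, h]; simp

lemma countUpTo_card [NeZero N] (η : Conf N) : countUpTo η N = numParticles η := by
  unfold countUpTo numParticles
  rw [Finset.card_filter]
  apply Finset.sum_nbij' (i := fun y => ((y : ℕ) : ZMod N))
    (j := fun z => if z.val = 0 then N else z.val)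
  · intro a ha; exact Finset.mem_univ _
  · intro z hz
    have := ZMod.val_lt z
    simp only [Finset.mem_Icc]
    split <;> omega
  · intro a ha
    simp only [Finset.mem_Icc] at ha
    rw [ZMod.val_natCast]
    rcases eq_or_lt_of_le ha.2 with h | h
    · simp [h]
    · rw [Nat.mod_eq_of_lt h]
      have : a ≠ 0 := by omega
      simp [this]
  · intro z hz
    split
    · next h => rw [ZMod.natCast_self]; exact ((ZMod.val_eq_zero z).mp h).symm
    · simp [ZMod.natCast_val, ZMod.cast_id]
  · intro a ha; rfl


variable {N K : ℕ}
def Q {N : ℕ} (η : Conf N) (j : ℕ) : ℕ := sInf {x : ℕ | 1 ≤ x ∧ x ≤ N ∧ countUpTo η x = j}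

lemma pos_eq [NeZero K] (η : Conf N) (m : ZMod K) : pos η m = Q η (repOne m) := rfl

lemma exists_count (η : Conf N) (hpart : countUpTo η N = K) {j : ℕ} (hj1 : 1 ≤ j) (hjK : j ≤ K) :
    ∃ x, 1 ≤ x ∧ x ≤ N ∧ countUpTo η x = j := by
  have hne : (N : ℕ) ∈ {x : ℕ | j ≤ countUpTo η x} := by simp [hpart, hjK]
  set x0 := sInf {x : ℕ | j ≤ countUpTo η x} with hx0
  have hmem : x0 ∈ {x : ℕ | j ≤ countUpTo η x} := Nat.sInf_mem ⟨N, hne⟩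
  have hleN : x0 ≤ N := Nat.sInf_le hne
  have hx0pos : x0 ≠ 0 := by
    intro h
    have := hmem
    rw [h] at this
    simp [countUpTo_zero] at this
    omega
  obtain ⟨y, hy0⟩ := Nat.exists_eq_succ_of_ne_zero hx0pos
  have hy : y ∉ {x : ℕ | j ≤ countUpTo η x} := Nat.notMem_of_lt_sInf (by omega)
  rw [hy0, Nat.succ_eq_add_one] at hmem hleN
  simp only [Set.mem_setOf_eq, not_le] at hy hmem
  have := countUpTo_step η y
  exact ⟨y + 1, by omega, hleN, by omega⟩

lemma Q_spec (η : Conf N) (hpart : countUpTo η N = K) {j : ℕ} (hj1 : 1 ≤ j) (hjK : j ≤ K) :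
    1 ≤ Q η j ∧ Q η j ≤ N ∧ countUpTo η (Q η j) = j :=
  Nat.sInf_mem (exists_count η hpart hj1 hjK)

lemma Q_min (η : Conf N) {j x : ℕ} (h1 : 1 ≤ x) (h2 : x ≤ N) (h3 : countUpTo η x = j) :
    Q η j ≤ x := Nat.sInf_le ⟨h1, h2, h3⟩

lemma Q_lt (η : Conf N) (hpart : countUpTo η N = K) {i j : ℕ} (hi : 1 ≤ i) (hij : i < j)
    (hj : j ≤ K) : Q η i < Q η j := by
  obtain ⟨_, _, hci⟩ := Q_spec η hpart hi (by omega)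
  obtain ⟨_, _, hcj⟩ := Q_spec η hpart (by omega) hj
  by_contra h
  have := countUpTo_mono η (le_of_not_gt h)
  omega

lemma eta_false_between (η : Conf N) (hpart : countUpTo η N = K) {j x : ℕ}
    (hj1 : 1 ≤ j) (hj : j + 1 ≤ K) (hx1 : Q η j < x) (hx2 : x < Q η (j+1)) :
    η ((x : ℕ) : ZMod N) = false := by
  obtain ⟨hq1, hq2, hc⟩ := Q_spec η hpart hj1 (by omega)
  obtain ⟨hq1', hq2', hc'⟩ := Q_spec η hpart (by omega) hj
  by_contra h
  rw [Bool.not_eq_false] at h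
  obtain ⟨y, rfl⟩ := Nat.exists_eq_succ_of_ne_zero (show x ≠ 0 by omega)
  have hcy : j ≤ countUpTo η y := hc ▸ countUpTo_mono η (by omega)
  have hcx : countUpTo η (y+1) ≤ j + 1 := hc' ▸ countUpTo_mono η (by omega)
  have := countUpTo_succ_true η h
  have : countUpTo η (y+1) = j + 1 := by omega
  have := Q_min η (show 1 ≤ y + 1 by omega) (by omega) this
  omega

lemma eta_false_low (η : Conf N) (hpart : countUpTo η N = K) (hK : 1 ≤ K) {x : ℕ}
    (hx1 : 1 ≤ x) (hx2 : x < Q η 1) : η ((x : ℕ) : ZMod N) = false := by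
  obtain ⟨hq1, hq2, hc⟩ := Q_spec η hpart le_rfl hK
  by_contra h
  rw [Bool.not_eq_false] at h
  obtain ⟨y, rfl⟩ := Nat.exists_eq_succ_of_ne_zero (show x ≠ 0 by omega)
  have hcx : countUpTo η (y+1) ≤ 1 := hc ▸ countUpTo_mono η (by omega)
  have := countUpTo_succ_true η h
  have : countUpTo η (y+1) = 1 := by omega
  have := Q_min η (show 1 ≤ y + 1 by omega) (by omega) this
  omega

lemma eta_false_high (η : Conf N) (hpart : countUpTo η N = K) (hK : 1 ≤ K) {x : ℕ}
    (hx1 : Q η K < x) (hx2 : x ≤ N) : η ((x : ℕ) : ZMod N) = false := by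
  obtain ⟨hq1, hq2, hc⟩ := Q_spec η hpart hK le_rfl
  by_contra h
  rw [Bool.not_eq_false] at h
  obtain ⟨y, rfl⟩ := Nat.exists_eq_succ_of_ne_zero (show x ≠ 0 by omega)
  have hcy : K ≤ countUpTo η y := hc ▸ countUpTo_mono η (by omega)
  have hcx : countUpTo η (y+1) ≤ K := hpart ▸ countUpTo_mono η hx2
  have := countUpTo_succ_true η h
  omega


variable {N K : ℕ}
lemma gap [NeZero N] (η : Conf N) (hpart : countUpTo η N = K) (herg : isErgodic η)
    {j : ℕ} (hj1 : 1 ≤ j) (hj : j + 1 ≤ K) : Q η (j+1) ≤ Q η j + 2 := by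
  by_contra h
  push_neg at h
  obtain ⟨hq1, hq2, _⟩ := Q_spec η hpart hj1 (by omega)
  obtain ⟨hq1', hq2', _⟩ := Q_spec η hpart (by omega) hj
  have h1 : η (((Q η j + 1 : ℕ) : ZMod N)) = false :=
    eta_false_between η hpart hj1 hj (by omega) (by omega)
  have h2 : η (((Q η j + 2 : ℕ) : ZMod N)) = false :=
    eta_false_between η hpart hj1 hj (by omega) (by omega)
  rcases herg ((Q η j + 1 : ℕ) : ZMod N) with hh | hh
  · rw [h1] at hh; exact absurd hh (by simp)
  · rw [show ((Q η j + 1 : ℕ) : ZMod N) + 1 = ((Q η j + 2 : ℕ) : ZMod N) by push_cast; ring] at hh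
    rw [h2] at hh; exact absurd hh (by simp)

lemma wrap [NeZero N] (η : Conf N) (hpart : countUpTo η N = K) (herg : isErgodic η)
    (hN : 3 ≤ N) (hK : 1 ≤ K) : N + Q η 1 ≤ Q η K + 2 := by
  by_contra h
  push_neg at h
  obtain ⟨hq1, hq2, _⟩ := Q_spec η hpart le_rfl hK
  obtain ⟨hq1', hq2', _⟩ := Q_spec η hpart hK le_rfl
  rcases Nat.lt_or_ge (Q η K + 2) (N + 1) with hc | hc
  ·
    have h1 : η (((Q η K + 1 : ℕ) : ZMod N)) = false :=
      eta_false_high η hpart hK (by omega) (by omega)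
    have h2 : η (((Q η K + 2 : ℕ) : ZMod N)) = false :=
      eta_false_high η hpart hK (by omega) (by omega)
    rcases herg ((Q η K + 1 : ℕ) : ZMod N) with hh | hh
    · rw [h1] at hh; exact absurd hh (by simp)
    · rw [show ((Q η K + 1 : ℕ) : ZMod N) + 1 = ((Q η K + 2 : ℕ) : ZMod N) by push_cast; ring] at hh
      rw [h2] at hh; exact absurd hh (by simp)
  · rcases Nat.lt_or_ge (Q η K) N with hc2 | hc2
    · -- Q η K = N - 1
      have hQK : Q η K + 1 = N := by omega
      have h1 : η (((N : ℕ) : ZMod N)) = false := eta_false_high η hpart hK (by omega) le_rfl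
      have h2 : η (((1 : ℕ) : ZMod N)) = false := eta_false_low η hpart hK le_rfl (by omega)
      rcases herg ((N : ℕ) : ZMod N) with hh | hh
      · rw [h1] at hh; exact absurd hh (by simp)
      · rw [show ((N : ℕ) : ZMod N) + 1 = ((1 : ℕ) : ZMod N) by push_cast; simp] at hh
        rw [h2] at hh; exact absurd hh (by simp)
    · -- Q η K = N, Q η 1 ≥ 3
      have h1 : η (((1 : ℕ) : ZMod N)) = false := eta_false_low η hpart hK le_rfl (by omega)
      have h2 : η (((2 : ℕ) : ZMod N)) = false := eta_false_low η hpart hK (by omega) (by omega)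
      rcases herg ((1 : ℕ) : ZMod N) with hh | hh
      · rw [h1] at hh; exact absurd hh (by simp)
      · rw [show ((1 : ℕ) : ZMod N) + 1 = ((2 : ℕ) : ZMod N) by push_cast; ring] at hh
        rw [h2] at hh; exact absurd hh (by simp)

lemma cdist_lt [NeZero N] {a b : ℕ} (ha : 1 ≤ a) (hab : a < b) (hb : b ≤ N) :
    cdist ((a : ZMod N)) ((b : ZMod N)) = b - a := by
  have hcast : ((b : ZMod N)) - a = ((b - a : ℕ) : ZMod N) := by
    have := Nat.cast_sub (R := ZMod N) hab.le
    rw [this]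
  have hlt : b - a < N := by omega
  unfold cdist
  rw [hcast, ZMod.val_natCast, Nat.mod_eq_of_lt hlt]
  have : b - a ≠ 0 := by omega
  simp [this]

lemma cdist_wrap [NeZero N] {a b : ℕ} (hb : 1 ≤ b) (hba : b < a) (ha : a ≤ N) :
    cdist ((a : ZMod N)) ((b : ZMod N)) = N - a + b := by
  have hcast : ((b : ZMod N)) - a = ((N - a + b : ℕ) : ZMod N) := by
    have h1 : ((N - a + b : ℕ) : ZMod N) + a = ((N + b : ℕ) : ZMod N) := by
      rw [← Nat.cast_add]
      congr 1
      omega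
    have h2 : ((N + b : ℕ) : ZMod N) = (b : ZMod N) := by
      push_cast
      simp
    rw [sub_eq_iff_eq_add, h1, h2]
  have hlt : N - a + b < N := by omega
  unfold cdist
  rw [hcast, ZMod.val_natCast, Nat.mod_eq_of_lt hlt]
  have : N - a + b ≠ 0 := by omega
  rw [if_neg this]

lemma repOne_mem [NeZero K] (m : ZMod K) : 1 ≤ repOne m ∧ repOne m ≤ K := by
  have := ZMod.val_lt m
  unfold repOne
  split <;> omega

lemma repOne_cast [NeZero K] {j : ℕ} (h1 : 1 ≤ j) (h2 : j ≤ K) : repOne ((j : ℕ) : ZMod K) = j := by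
  unfold repOne
  rw [ZMod.val_natCast]
  rcases eq_or_lt_of_le h2 with h | h
  · simp [h]
  · rw [Nat.mod_eq_of_lt h]
    have : j ≠ 0 := by omega
    simp [this]

lemma cast_repOne [NeZero K] (m : ZMod K) : ((repOne m : ℕ) : ZMod K) = m := by
  unfold repOne
  split
  · next h => rw [ZMod.natCast_self]; exact ((ZMod.val_eq_zero m).mp h).symm
  · simp [ZMod.natCast_val, ZMod.cast_id]

lemma repOne_injective [NeZero K] : Function.Injective (repOne : ZMod K → ℕ) := by
  intro a b h
  have := cast_repOne a
  have := cast_repOne b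
  rw [← cast_repOne a, ← cast_repOne b, h]

lemma repOne_sub_one [NeZero K] (m : ZMod K) :
    repOne (m - 1) = if repOne m = 1 then K else repOne m - 1 := by
  have hmem := repOne_mem m
  split
  · next h =>
    have hm : m = 1 := by rw [← cast_repOne m, h]; norm_num
    rw [hm, sub_self]
    simp [repOne, ZMod.val_zero]
  · next h =>
    have h2 : (2 : ℕ) ≤ repOne m := by omega
    conv_lhs => rw [← cast_repOne m]
    rw [show ((repOne m : ℕ) : ZMod K) - 1 = ((repOne m - 1 : ℕ) : ZMod K) by
      rw [Nat.cast_sub (by omega)]; simp]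
    exact repOne_cast (by omega) (by omega)


end FepAux

open FepAux in
/-- **Static mapping, well-definedness.**  For `N ≥ 2`, `N/2 < K < N`, every ergodic
configuration `η ∈ ℰ_{N,K}` and every `k ∈ ℤ/Kℤ`, the values
`σ^{(k,η)}_l = 2 − d(x_{k+l−1}(η), x_{k+l}(η))` all lie in `{0,1}`, and the resulting
configuration `σ^{(k,η)}` has exactly `2K − N` occupied sites, i.e. `σ^{(k,η)} ∈ Γ_{K,2K−N}`. -/
theorem fep_static_mapping_well_defined
    (N K : ℕ) [NeZero N] [NeZero K] (hN : 2 ≤ N) (h1 : N < 2 * K) (h2 : K < N)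
    (η : Conf N) (hη : numParticles η = K ∧ isErgodic η) (k : ZMod K) :
    (∀ l : ZMod K, sigmaVal η k l = 0 ∨ sigmaVal η k l = 1) ∧
      numParticles (sigmaConf η k) = 2 * K - N := by
  obtain ⟨hcard, herg⟩ := hη
  have hN3 : 3 ≤ N := by omega
  have hK2 : 2 ≤ K := by omega
  have hpart : countUpTo η N = K := by rw [countUpTo_card]; exact hcard
  obtain ⟨hQ1a, hQ1b, _⟩ := Q_spec η hpart le_rfl (by omega : 1 ≤ K)
  obtain ⟨hQKa, hQKb, _⟩ := Q_spec η hpart (by omega : 1 ≤ K) le_rfl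
  have hQ1K : Q η 1 < Q η K := Q_lt η hpart le_rfl (by omega) le_rfl
  have hwrap : N + Q η 1 ≤ Q η K + 2 := wrap η hpart herg hN3 (by omega)
  -- the distance sequence
  set d : ℕ → ℕ := fun j => if j = 1 then N - Q η K + Q η 1 else Q η j - Q η (j-1) with hd
  -- d computes the cyclic distances
  have hDval : ∀ m : ZMod K,
      cdist ((Q η (repOne (m-1)) : ℕ) : ZMod N) ((Q η (repOne m) : ℕ) : ZMod N)
        = d (repOne m) := by
    intro m
    have hmem := repOne_mem m
    rw [repOne_sub_one m]
    by_cases h : repOne m = 1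
    · rw [if_pos h, h, hd]
      simp only [if_pos rfl]
      exact cdist_wrap hQ1a hQ1K hQKb
    · rw [if_neg h, hd]
      simp only [if_neg h]
      have h2' : 2 ≤ repOne m := by omega
      have hlt : Q η (repOne m - 1) < Q η (repOne m) :=
        Q_lt η hpart (by omega) (by omega) hmem.2
      obtain ⟨ha, _, _⟩ := Q_spec η hpart (show 1 ≤ repOne m - 1 by omega) (by omega)
      obtain ⟨_, hb, _⟩ := Q_spec η hpart hmem.1 hmem.2
      exact cdist_lt ha hlt hb
  -- each distance is 1 or 2
  have hdmem : ∀ j, 1 ≤ j → j ≤ K → d j = 1 ∨ d j = 2 := by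
    intro j hj1 hjK
    rw [hd]
    by_cases h : j = 1
    · simp only [if_pos h]
      omega
    · simp only [if_neg h]
      have hlt : Q η (j-1) < Q η j := Q_lt η hpart (by omega) (by omega) hjK
      have hgap : Q η j ≤ Q η (j-1) + 2 := by
        have := gap η hpart herg (show 1 ≤ j - 1 by omega) (show (j-1) + 1 ≤ K by omega)
        rw [show j - 1 + 1 = j by omega] at this
        omega
      omega
  -- monotonicity of Q (≤ version on [1,K])
  have hQle : ∀ i j, 1 ≤ i → i ≤ j → j ≤ K → Q η i ≤ Q η j := by
    intro i j hi hij hj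
    rcases eq_or_lt_of_le hij with rfl | h
    · exact le_rfl
    · exact (Q_lt η hpart hi h hj).le
  -- telescoping sum
  have htel : ∀ n, 1 ≤ n → n ≤ K →
      ∑ j ∈ Finset.Icc 2 n, (Q η j - Q η (j-1)) = Q η n - Q η 1 := by
    intro n hn1 hnK
    induction n with
    | zero => omega
    | succ m ih =>
      rcases Nat.eq_or_lt_of_le hn1 with h | h
      · rw [← h]; simp
      · have hm1 : 1 ≤ m := by omega
        rw [Finset.sum_Icc_succ_top (by omega : 2 ≤ m + 1), ih hm1 (by omega)]
        have h1' := hQle 1 m le_rfl hm1 (by omega)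
        have h2' := hQle m (m+1) hm1 (by omega) hnK
        simp only [Nat.add_sub_cancel]
        omega
  -- sum of all distances is N
  have hsum : ∑ j ∈ Finset.Icc 1 K, d j = N := by
    rw [show Finset.Icc 1 K = insert 1 (Finset.Icc 2 K) by ext x; simp; omega,
        Finset.sum_insert (by simp)]
    have hrest : ∑ j ∈ Finset.Icc 2 K, d j = ∑ j ∈ Finset.Icc 2 K, (Q η j - Q η (j-1)) := by
      apply Finset.sum_congr rfl
      intro j hj
      simp only [Finset.mem_Icc] at hj
      rw [hd]
      simp only [if_neg (show j ≠ 1 by omega)]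
    have hw : d 1 = N - Q η K + Q η 1 := by rw [hd]; simp
    rw [hrest, htel K (by omega) le_rfl, hw]
    omega
  -- the sigma configuration's occupied set via d
  have hfilter : (Finset.univ.filter fun l : ZMod K => sigmaConf η k l = true)
      = Finset.univ.filter fun l : ZMod K => d (repOne (k + l)) = 1 := by
    ext l
    simp only [Finset.mem_filter, Finset.mem_univ, true_and, sigmaConf, decide_eq_true_iff]
    rw [pos_eq η (k + l - 1), pos_eq η (k + l), hDval (k + l)]
  have hcount : numParticles (sigmaConf η k)
      = ((Finset.Icc 1 K).filter fun j => d j = 1).card := by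
    unfold numParticles
    rw [hfilter]
    apply Finset.card_bij (fun l _ => repOne (k + l))
    · intro l hl
      simp only [Finset.mem_filter, Finset.mem_univ, true_and] at hl ⊢
      have := repOne_mem (k + l)
      exact ⟨Finset.mem_Icc.mpr ⟨this.1, this.2⟩, hl⟩
    · intro l1 hl1 l2 hl2 h
      have := repOne_injective h
      exact add_left_cancel this
    · intro j hj
      simp only [Finset.mem_filter, Finset.mem_Icc] at hj
      refine ⟨(j : ZMod K) - k, ?_, ?_⟩
      · simp only [Finset.mem_filter, Finset.mem_univ, true_and]
        rw [show k + ((j : ZMod K) - k) = (j : ZMod K) by ring,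
            repOne_cast hj.1.1 hj.1.2]
        exact hj.2
      · rw [show k + ((j : ZMod K) - k) = (j : ZMod K) by ring,
            repOne_cast hj.1.1 hj.1.2]
  -- counting
  have hsplit := Finset.card_filter_add_card_filter_not
    (s := Finset.Icc 1 K) (p := fun j => d j = 1)
  have hsum2 : ∑ j ∈ Finset.Icc 1 K, d j
      = ((Finset.Icc 1 K).filter fun j => d j = 1).card
        + 2 * ((Finset.Icc 1 K).filter fun j => ¬ d j = 1).card := by
    rw [← Finset.sum_filter_add_sum_filter_not (Finset.Icc 1 K) (fun j => d j = 1)]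
    congr 1
    · rw [Finset.sum_congr rfl (fun j hj => (Finset.mem_filter.mp hj).2), Finset.sum_const,
        smul_eq_mul, mul_one]
    · rw [Finset.sum_congr rfl (fun j hj => ?_), Finset.sum_const, smul_eq_mul, mul_comm]
      have hj' := Finset.mem_filter.mp hj
      have := hdmem j (Finset.mem_Icc.mp hj'.1).1 (Finset.mem_Icc.mp hj'.1).2
      omega
  have hKcard : (Finset.Icc 1 K).card = K := by rw [Nat.card_Icc]; omega
  constructor
  · intro l
    have hd1 := hdmem (repOne (k + l)) (repOne_mem (k+l)).1 (repOne_mem (k+l)).2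
    unfold sigmaVal
    rw [pos_eq η (k + l - 1), pos_eq η (k + l), hDval (k + l)]
    rcases hd1 with h | h <;> rw [h] <;> simp <;> omega
  · rw [hcount]
    omega

end
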